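/- Let n ≥ 7 be odd and N = (n+1)/2. Then the average of mei(S_T) over all N-element subsets T of {1, …, n−1}, where S_T := {0, n} ∪ ({1,…,n−1} \ T), satisfies (1/C(n−1, N)) · Σ_T mei(S_T) ≤ log_{3/2} n + 3. (Expectation upper bound of Lemma bigMEI: E[mei(P_{t+1})] ≤ log_{3/2} n + O(1).) -/

import Mathlib

open Finset

/-- For `a ∈ J`, the distance from `a` to the next larger element of `J`
(`0` if `a` is the maximum of `J`). -/
def gapAfter (J : Finset ℕ) (a : ℕ) : ℕ :=
  ((J.filter (fun b => a < b)).min.untopD a) - a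

/-- The maximal empty interval size of `J`: listing the elements of `J` in increasing
order as `j_1 < j_2 < … < j_m`, this is `max_{1 ≤ a ≤ m-1} (j_{a+1} - j_a)`. -/
def mei (J : Finset ℕ) : ℕ := J.sup (fun a => gapAfter J a)

/-- The set of first objective values surviving when the removed set is `T`:
`S_T = {0, n} ∪ ({1,…,n-1} \ T)`. -/
def STn (n : ℕ) (T : Finset ℕ) : Finset ℕ :=
  insert 0 (insert n ((Finset.Icc 1 (n - 1)) \ T))

lemma mem_STn_le {n : ℕ} {T : Finset ℕ} {b : ℕ} (hb : b ∈ STn n T) : b ≤ n := by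
  simp only [STn, mem_insert, mem_sdiff, mem_Icc] at hb
  omega

lemma mei_STn_le (n : ℕ) (T : Finset ℕ) : mei (STn n T) ≤ n := by
  apply Finset.sup_le
  intro a _
  unfold gapAfter
  by_cases hF : ((STn n T).filter (fun b => a < b)).Nonempty
  · obtain ⟨b, hb⟩ := Finset.min_of_nonempty hF
    have hbJ := Finset.mem_of_min hb
    rw [hb, WithTop.untopD_coe]
    have := mem_STn_le (Finset.mem_filter.1 hbJ).1
    omega
  · rw [Finset.not_nonempty_iff_eq_empty.1 hF, Finset.min_empty, WithTop.untopD_top]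
    omega

lemma gap_structure {n k : ℕ} (T : Finset ℕ)
    (hk : 1 ≤ k) (hmei : k ≤ mei (STn n T)) :
    ∃ a, a + k ≤ n ∧ Finset.Icc (a+1) (a+k-1) ⊆ T := by
  obtain ⟨a, haS, hga⟩ := (Finset.le_sup_iff (show (⊥:ℕ) < k by exact hk)).1 hmei
  unfold gapAfter at hga
  set F := (STn n T).filter (fun b => a < b) with hFdef
  have hF : F.Nonempty := by
    by_contra h
    rw [Finset.not_nonempty_iff_eq_empty.1 h, Finset.min_empty, WithTop.untopD_top] at hga
    omega
  obtain ⟨b, hb⟩ := Finset.min_of_nonempty hF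
  have hbF := Finset.mem_of_min hb
  rw [hb, WithTop.untopD_coe] at hga
  have hbS : b ∈ STn n T := (Finset.mem_filter.1 hbF).1
  have hab : a < b := (Finset.mem_filter.1 hbF).2
  have hbn : b ≤ n := mem_STn_le hbS
  refine ⟨a, by omega, ?_⟩
  intro x hx
  rw [Finset.mem_Icc] at hx
  have hxS : x ∉ STn n T := by
    intro hxS
    have hxF : x ∈ F := Finset.mem_filter.2 ⟨hxS, by omega⟩
    have := Finset.min_le hxF
    rw [hb] at this
    have : b ≤ x := WithTop.coe_le_coe.1 this
    omega
  have hxI : x ∈ Finset.Icc 1 (n-1) := Finset.mem_Icc.2 (by omega)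
  by_contra hxT
  exact hxS (by simp only [STn, mem_insert, mem_sdiff]; tauto)

lemma count_superset_le {n N a k : ℕ} (hk : 1 ≤ k) (hak : a + k ≤ n) :
    (((Finset.Icc 1 (n-1)).powersetCard N).filter
      (fun T => Finset.Icc (a+1) (a+k-1) ⊆ T)).card ≤ (n-k).choose (N-(k-1)) := by
  classical
  set A := Finset.Icc (a+1) (a+k-1) with hAdef
  have hA : A.card = k - 1 := by rw [hAdef, Nat.card_Icc]; omega
  have hAI : A ⊆ Finset.Icc 1 (n-1) := by
    intro x hx
    rw [hAdef, Finset.mem_Icc] at hx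
    rw [Finset.mem_Icc]
    omega
  have hcard : (((Finset.Icc 1 (n-1)) \ A).powersetCard (N-(k-1))).card
      = (n-k).choose (N-(k-1)) := by
    rw [Finset.card_powersetCard, Finset.card_sdiff_of_subset hAI, hA, Nat.card_Icc]
    congr 1
    omega
  rw [← hcard]
  apply Finset.card_le_card_of_injOn (fun T => T \ A)
  · intro T hT
    rw [Finset.mem_coe, Finset.mem_filter, Finset.mem_powersetCard] at hT
    obtain ⟨⟨hTs, hTc⟩, hAT⟩ := hT
    rw [Finset.mem_coe, Finset.mem_powersetCard]
    exact ⟨Finset.sdiff_subset_sdiff hTs (le_refl _),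
      by rw [Finset.card_sdiff_of_subset hAT, hTc, hA]⟩
  · intro T1 h1 T2 h2 h12
    simp only [Finset.coe_filter, Set.mem_setOf_eq] at h1 h2
    have e1 := Finset.sdiff_union_of_subset h1.2
    have e2 := Finset.sdiff_union_of_subset h2.2
    rw [← e1, ← e2]
    simp only at h12
    rw [h12]

lemma count_k_le {n N k : ℕ} (hk1 : 1 ≤ k) (hkn : k ≤ n) :
    (((Finset.Icc 1 (n-1)).powersetCard N).filter
      (fun T => k ≤ mei (STn n T))).card ≤ n * ((n-k).choose (N-(k-1))) := by
  classical
  have hsub : (((Finset.Icc 1 (n-1)).powersetCard N).filter (fun T => k ≤ mei (STn n T)))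
      ⊆ (Finset.range (n-k+1)).biUnion
        (fun a => ((Finset.Icc 1 (n-1)).powersetCard N).filter
          (fun T => Finset.Icc (a+1) (a+k-1) ⊆ T)) := by
    intro T hT
    rw [Finset.mem_filter] at hT
    obtain ⟨a, ha, hss⟩ := gap_structure T hk1 hT.2
    exact Finset.mem_biUnion.2 ⟨a, Finset.mem_range.2 (by omega),
      Finset.mem_filter.2 ⟨hT.1, hss⟩⟩
  calc (((Finset.Icc 1 (n-1)).powersetCard N).filter (fun T => k ≤ mei (STn n T))).card
      ≤ _ := Finset.card_le_card hsub
    _ ≤ ∑ a ∈ Finset.range (n-k+1),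
        (((Finset.Icc 1 (n-1)).powersetCard N).filter
          (fun T => Finset.Icc (a+1) (a+k-1) ⊆ T)).card := Finset.card_biUnion_le
    _ ≤ ∑ a ∈ Finset.range (n-k+1), (n-k).choose (N-(k-1)) := by
        apply Finset.sum_le_sum
        intro a ha
        exact count_superset_le hk1 (by rw [Finset.mem_range] at ha; omega)
    _ = (n-k+1) * ((n-k).choose (N-(k-1))) := by
        rw [Finset.sum_const, smul_eq_mul, Finset.card_range]
    _ ≤ n * ((n-k).choose (N-(k-1))) := Nat.mul_le_mul_right _ (by omega)

lemma count_k_zero {n N k : ℕ} (hk : N + 1 < k) :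
    (((Finset.Icc 1 (n-1)).powersetCard N).filter
      (fun T => k ≤ mei (STn n T))) = ∅ := by
  rw [Finset.filter_eq_empty_iff]
  intro T hT hmei
  rw [Finset.mem_powersetCard] at hT
  obtain ⟨a, ha, hss⟩ := gap_structure T (by omega) hmei
  have hc := Finset.card_le_card hss
  rw [Nat.card_Icc, hT.2] at hc
  omega

lemma choose_ratio {n N : ℕ} (h3N : 3 * N + 2 ≤ 2 * n) (hNn : N + 2 ≤ n) :
    ∀ j ≤ N, 3^j * (n-1-j).choose (N-j) ≤ 2^j * (n-1).choose N := by
  intro j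
  induction j with
  | zero => simp
  | succ j ih =>
    intro hj
    have ihj := ih (by omega)
    have e1 : n-2-j+1 = n-1-j := by omega
    have e2 : N-1-j+1 = N-j := by omega
    have key := Nat.add_one_mul_choose_eq (n-2-j) (N-1-j)
    simp only [Nat.succ_eq_add_one, e1, e2] at key
    have epos : 0 < n-1-j := by omega
    have hfac : 3 * (N - j) ≤ 2 * (n-1-j) := by omega
    have goal' : (n-1-j) * (3^(j+1) * (n-2-j).choose (N-1-j))
        ≤ (n-1-j) * (2^(j+1) * (n-1).choose N) := by
      calc (n-1-j) * (3^(j+1) * (n-2-j).choose (N-1-j))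
          = 3^j * (3 * ((n-1-j) * (n-2-j).choose (N-1-j))) := by ring
        _ = 3^j * (3 * ((n-1-j).choose (N-j) * (N-j))) := by rw [key]
        _ = (3 * (N-j)) * (3^j * (n-1-j).choose (N-j)) := by ring
        _ ≤ (2 * (n-1-j)) * (2^j * (n-1).choose N) := Nat.mul_le_mul hfac ihj
        _ = (n-1-j) * (2^(j+1) * (n-1).choose N) := by ring
    have hres := Nat.le_of_mul_le_mul_left goal' epos
    have e3 : n-1-(j+1) = n-2-j := by omega
    have e4 : N-(j+1) = N-1-j := by omega
    rw [e3, e4]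
    exact hres

lemma indicator_sum {m K : ℕ} (h : m ≤ K) :
    (∑ k ∈ Finset.Icc 1 K, if k ≤ m then 1 else 0) = m := by
  classical
  rw [← Finset.card_filter]
  have heq : (Finset.Icc 1 K).filter (fun k => k ≤ m) = Finset.Icc 1 m := by
    ext k
    simp only [Finset.mem_filter, Finset.mem_Icc]
    omega
  rw [heq, Nat.card_Icc]
  omega

lemma real_lt_pow (m : ℕ) : (m : ℝ) < (3/2:ℝ)^m := by
  induction m with
  | zero => norm_num
  | succ m ih =>
    by_cases hm : m ≤ 1
    · interval_cases m <;> norm_num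
    · have h1 : ((m:ℝ)+1) ≤ (3/2) * m := by
        have : (2:ℝ) ≤ m := by exact_mod_cast (by omega : 2 ≤ m)
        linarith
      have h2 : (3/2:ℝ) * m < (3/2) * (3/2)^m := by
        apply mul_lt_mul_of_pos_left ih
        norm_num
      push_cast
      calc ((m:ℝ)+1) ≤ (3/2) * m := h1
        _ < (3/2) * (3/2)^m := h2
        _ = (3/2)^(m+1) := by ring

/-- Convexity step: `(2/3)^ε ≤ 1 - ε/3` for `ε ∈ [0,1]`. -/
lemma exp_convex_bound {ε : ℝ} (h0 : 0 ≤ ε) (h1 : ε ≤ 1) :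
    Real.exp (ε * Real.log (2/3)) ≤ 1 - ε/3 := by
  have hc := convexOn_exp.2 (Set.mem_univ (0:ℝ)) (Set.mem_univ (Real.log (2/3)))
    (by linarith : (0:ℝ) ≤ 1 - ε) h0 (by ring)
  simp only [smul_eq_mul, mul_zero, zero_add, Real.exp_zero, mul_one] at hc
  rw [Real.exp_log (by norm_num : (0:ℝ) < 2/3)] at hc
  calc Real.exp (ε * Real.log (2/3)) ≤ (1-ε) + ε * (2/3) := hc
    _ = 1 - ε/3 := by ring

/-- Expectation bound of Lemma `bigMEI`: for odd `n ≥ 7` and `N = (n+1)/2`, the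
average of `mei(S_T)` over all `N`-element subsets `T` of `{1,…,n-1}` is at most
`log_{3/2} n + 3`. -/
theorem stmt13 (n N : ℕ) (hn : 7 ≤ n) (hodd : Odd n) (hN : N = (n + 1) / 2) :
    ((∑ T ∈ (Finset.Icc 1 (n - 1)).powersetCard N, mei (STn n T) : ℕ) : ℝ) /
        ((n - 1).choose N : ℝ)
      ≤ Real.logb (3 / 2) n + 3 := by
  classical
  obtain ⟨m, hm⟩ := hodd
  have hNval : N = m + 1 := by omega
  have h3N : 3 * N + 2 ≤ 2 * n := by omega
  have hNn : N + 2 ≤ n := by omega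
  set P := (Finset.Icc 1 (n-1)).powersetCard N with hP
  set C := (n-1).choose N with hC
  have hPcard : P.card = C := by
    rw [hP, Finset.card_powersetCard, Nat.card_Icc]
    congr 1
  have hCpos : 0 < C := Nat.choose_pos (by omega)
  have hCposR : (0:ℝ) < (C:ℝ) := by exact_mod_cast hCpos
  set count := fun k => ((P.filter (fun T => k ≤ mei (STn n T))).card) with hcount
  -- Step 1: rewrite the sum as a sum of tail counts
  have hswap : (∑ T ∈ P, mei (STn n T)) = ∑ k ∈ Finset.Icc 1 n, count k := by
    have h1 : (∑ T ∈ P, mei (STn n T))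
        = ∑ T ∈ P, ∑ k ∈ Finset.Icc 1 n, (if k ≤ mei (STn n T) then 1 else 0) := by
      apply Finset.sum_congr rfl
      intro T _
      exact (indicator_sum (mei_STn_le n T)).symm
    rw [h1, Finset.sum_comm]
    apply Finset.sum_congr rfl
    intro k _
    exact (Finset.card_filter _ _).symm
  -- Real number setup
  have hn0 : (0:ℝ) < (n:ℝ) := by positivity
  set L := Real.logb (3/2) n with hL
  have hL0 : 0 ≤ L := Real.logb_nonneg (by norm_num) (by exact_mod_cast Nat.one_le_iff_ne_zero.2 (by omega))
  set k0 := Nat.floor L + 1 with hk0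
  have hLk0 : L < (k0:ℝ) := by
    rw [hk0]
    push_cast
    exact Nat.lt_floor_add_one L
  have hk0L : (k0:ℝ) ≤ L + 1 := by
    rw [hk0]
    push_cast
    have := Nat.floor_le hL0
    linarith
  have hk0n : k0 ≤ n := by
    have hLn : L < n := by
      rw [hL]
      rw [Real.logb_lt_iff_lt_rpow (by norm_num : (1:ℝ) < 3/2) hn0]
      rw [Real.rpow_natCast]
      exact real_lt_pow n
    have : Nat.floor L < n := (Nat.floor_lt hL0).2 hLn
    omega
  have hk01 : 1 ≤ k0 := by omega
  -- per-k real bound for tail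
  have hperk : ∀ k ∈ Finset.Ioc k0 n,
      ((count k : ℕ) : ℝ) ≤ (n:ℝ) * (2/3)^(k-1) * C := by
    intro k hk
    rw [Finset.mem_Ioc] at hk
    have hk1 : 1 ≤ k := by omega
    by_cases hkN : k ≤ N + 1
    · have hcnt : count k ≤ n * ((n-k).choose (N-(k-1))) := count_k_le hk1 hk.2
      have hratio := choose_ratio h3N hNn (k-1) (by omega)
      have e5 : n-1-(k-1) = n-k := by omega
      rw [e5] at hratio
      -- cast to ℝ
      have hratioR : ((n-k).choose (N-(k-1)) : ℝ) ≤ (2/3)^(k-1) * C := by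
        have h3 : (0:ℝ) < 3^(k-1) := by positivity
        rw [div_pow, div_mul_eq_mul_div, le_div_iff₀ h3]
        have : ((3:ℝ))^(k-1) * ((n-k).choose (N-(k-1)) : ℝ)
            ≤ (2:ℝ)^(k-1) * (C:ℝ) := by
          exact_mod_cast hratio
        linarith
      calc ((count k : ℕ) : ℝ) ≤ (n:ℝ) * ((n-k).choose (N-(k-1)) : ℝ) := by
            exact_mod_cast hcnt
        _ ≤ (n:ℝ) * ((2/3)^(k-1) * C) := by
            apply mul_le_mul_of_nonneg_left hratioR (le_of_lt hn0)
        _ = (n:ℝ) * (2/3)^(k-1) * C := by ring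
    · have : count k = 0 := by
        rw [hcount]
        simp only
        rw [count_k_zero (by omega)]
        simp
      rw [this]
      simp only [Nat.cast_zero]
      positivity
  -- split the sum
  have hsplit : (∑ k ∈ Finset.Icc 1 n, ((count k : ℕ):ℝ))
      = (∑ k ∈ Finset.Ioc 0 k0, ((count k : ℕ):ℝ))
        + ∑ k ∈ Finset.Ioc k0 n, ((count k : ℕ):ℝ) := by
    rw [show Finset.Icc 1 n = Finset.Ioc 0 n from by ext x; simp [Finset.mem_Icc, Finset.mem_Ioc]; omega]
    exact (Finset.sum_Ioc_consecutive _ (Nat.zero_le k0) hk0n).symm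
  -- head bound
  have hhead : (∑ k ∈ Finset.Ioc 0 k0, ((count k : ℕ):ℝ)) ≤ (k0:ℝ) * C := by
    calc (∑ k ∈ Finset.Ioc 0 k0, ((count k : ℕ):ℝ))
        ≤ ∑ k ∈ Finset.Ioc 0 k0, (C:ℝ) := by
          apply Finset.sum_le_sum
          intro k _
          have : count k ≤ P.card := Finset.card_filter_le _ _
          rw [hPcard] at this
          exact_mod_cast this
      _ = (k0:ℝ) * C := by
          rw [Finset.sum_const, Nat.card_Ioc, nsmul_eq_mul]
          norm_num
  -- geometric tail
  have hgeo : (∑ k ∈ Finset.Ioc k0 n, ((2:ℝ)/3)^(k-1)) ≤ 3 * (2/3)^k0 := by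
    have hstep : ∀ k ∈ Finset.Ioc k0 n, ((2:ℝ)/3)^(k-1) = (3/2) * (2/3)^k := by
      intro k hk
      rw [Finset.mem_Ioc] at hk
      have hk1 : k - 1 + 1 = k := by omega
      conv_rhs => rw [← hk1]
      rw [pow_succ]
      ring
    rw [Finset.sum_congr rfl hstep, ← Finset.mul_sum]
    have hsub2 : Finset.Ioc k0 n ⊆ Finset.Ico (k0+1) (n+1) := by
      intro x hx
      simp only [Finset.mem_Ioc] at hx
      simp only [Finset.mem_Ico]
      omega
    have h1 : (∑ k ∈ Finset.Ioc k0 n, ((2:ℝ)/3)^k)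
        ≤ ∑ k ∈ Finset.Ico (k0+1) (n+1), ((2:ℝ)/3)^k := by
      apply Finset.sum_le_sum_of_subset_of_nonneg hsub2
      intro i _ _
      positivity
    have h2 : (∑ k ∈ Finset.Ico (k0+1) (n+1), ((2:ℝ)/3)^k)
        ≤ (2/3)^(k0+1) / (1 - 2/3) :=
      geom_sum_Ico_le_of_lt_one (by norm_num) (by norm_num)
    have h3 : ((2:ℝ)/3)^(k0+1) / (1 - 2/3) = 3 * ((2/3)^k0 * (2/3)) := by
      rw [pow_succ]
      ring
    calc (3/2:ℝ) * ∑ k ∈ Finset.Ioc k0 n, ((2:ℝ)/3)^k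
        ≤ (3/2) * ((2/3)^(k0+1) / (1 - 2/3)) := by
          apply mul_le_mul_of_nonneg_left (h1.trans h2) (by norm_num)
      _ = 3 * (2/3)^k0 := by rw [h3]; ring
  -- tail bound
  have htail : (∑ k ∈ Finset.Ioc k0 n, ((count k : ℕ):ℝ))
      ≤ (n:ℝ) * C * (3 * (2/3)^k0) := by
    calc (∑ k ∈ Finset.Ioc k0 n, ((count k : ℕ):ℝ))
        ≤ ∑ k ∈ Finset.Ioc k0 n, (n:ℝ) * (2/3)^(k-1) * C := Finset.sum_le_sum hperk
      _ = (n:ℝ) * C * ∑ k ∈ Finset.Ioc k0 n, ((2:ℝ)/3)^(k-1) := by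
          rw [Finset.mul_sum]
          apply Finset.sum_congr rfl
          intro k _
          ring
      _ ≤ (n:ℝ) * C * (3 * (2/3)^k0) := by
          apply mul_le_mul_of_nonneg_left hgeo
          positivity
  -- the analytic bound: k0 + 3 n (2/3)^k0 ≤ L + 3
  have hanalytic : (k0:ℝ) + (n:ℝ) * (3 * (2/3)^k0) ≤ L + 3 := by
    set ε := (k0:ℝ) - L with hε
    have hε0 : 0 ≤ ε := by rw [hε]; linarith
    have hε1 : ε ≤ 1 := by rw [hε]; linarith
    have hnL : (n:ℝ) = (3/2:ℝ) ^ L := by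
      rw [hL, Real.rpow_logb (by norm_num) (by norm_num) hn0]
    have hpow : (n:ℝ) * (2/3:ℝ)^k0 = Real.exp (ε * Real.log (2/3)) := by
      have h23 : ((2:ℝ)/3)^k0 = ((3/2:ℝ) ^ ((k0:ℕ):ℝ))⁻¹ := by
        rw [Real.rpow_natCast]
        rw [show ((2:ℝ)/3) = ((3:ℝ)/2)⁻¹ by norm_num, inv_pow]
      rw [h23, hnL]
      rw [← Real.rpow_neg (by norm_num : (0:ℝ) ≤ 3/2)]
      rw [← Real.rpow_add (by norm_num : (0:ℝ) < 3/2)]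
      rw [Real.rpow_def_of_pos (by norm_num : (0:ℝ) < 3/2)]
      congr 1
      have : Real.log (2/3) = - Real.log (3/2) := by
        rw [show ((2:ℝ)/3) = ((3:ℝ)/2)⁻¹ by norm_num, Real.log_inv]
      rw [this, hε]
      ring
    have hbound := exp_convex_bound hε0 hε1
    have : (n:ℝ) * (3 * (2/3)^k0) = 3 * ((n:ℝ) * (2/3)^k0) := by ring
    rw [this, hpow]
    have : (k0:ℝ) = L + ε := by rw [hε]; ring
    rw [this]
    linarith
  -- put it together
  rw [div_le_iff₀ hCposR]
  have hcast : ((∑ T ∈ P, mei (STn n T) : ℕ) : ℝ)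
      = ∑ k ∈ Finset.Icc 1 n, ((count k : ℕ):ℝ) := by
    rw [hswap]
    push_cast
    rfl
  calc ((∑ T ∈ P, mei (STn n T) : ℕ) : ℝ)
      = (∑ k ∈ Finset.Ioc 0 k0, ((count k : ℕ):ℝ))
        + ∑ k ∈ Finset.Ioc k0 n, ((count k : ℕ):ℝ) := by rw [hcast, hsplit]
    _ ≤ (k0:ℝ) * C + (n:ℝ) * C * (3 * (2/3)^k0) := add_le_add hhead htail
    _ = ((k0:ℝ) + (n:ℝ) * (3 * (2/3)^k0)) * C := by ring
    _ ≤ (L + 3) * C := by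
        apply mul_le_mul_of_nonneg_right hanalytic (le_of_lt hCposR)
    _ = (Real.logb (3/2) n + 3) * C := by rw [hL]
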